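/- Let t, v ≥ 2 be integers. Then limsup_{k→∞} CAN(t,k,v)/log₂ k ≤ v(t−1) / log₂(v^(t−1)/(v^(t−1)−1)). -/

import Mathlib

open Filter



open Finset

section LLL
variable {Ω I : Type*} [Fintype Ω] [DecidableEq Ω] [Fintype I] [DecidableEq I]

/-- intersection of complements of events in `T` -/
noncomputable def Wfree (A : I → Finset Ω) (T : Finset I) : Finset Ω :=
  Finset.univ.filter (fun ω => ∀ j ∈ T, ω ∉ A j)

lemma Wfree_empty (A : I → Finset Ω) : Wfree A ∅ = Finset.univ := by
  simp [Wfree]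

lemma Wfree_insert (A : I → Finset Ω) (j : I) (T : Finset I) :
    Wfree A (insert j T) = Wfree A T \ A j := by
  ext ω; rw [Finset.mem_sdiff]; simp only [Wfree, mem_filter, mem_univ, true_and, mem_sdiff, mem_insert]
  constructor
  · intro h; exact ⟨fun l hl => h l (Or.inr hl), h j (Or.inl rfl)⟩
  · rintro ⟨h1, h2⟩ l (rfl | hl); exact h2; exact h1 l hl

lemma Wfree_mono (A : I → Finset Ω) {T T' : Finset I} (h : T ⊆ T') :
    Wfree A T' ⊆ Wfree A T := by
  intro ω hω; simp only [Wfree, mem_filter] at *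
  exact ⟨hω.1, fun j hj => hω.2 j (h hj)⟩

lemma card_Wfree_insert (A : I → Finset Ω) (j : I) (T : Finset I) :
    ((Wfree A (insert j T)).card : ℝ) = (Wfree A T).card - ((A j ∩ Wfree A T).card : ℝ) := by
  rw [Wfree_insert]
  have h := Finset.card_sdiff_add_card_inter (Wfree A T) (A j)
  rw [inter_comm (Wfree A T) (A j)] at h
  have := congrArg (fun n : ℕ => (n : ℝ)) h
  push_cast at this ⊢
  linarith

/-- Crude symmetric Lovász Local Lemma, counting version. -/
theorem lll_crude (A : I → Finset Ω) (Γ : I → Finset I) (hΓ : ∀ i, i ∈ Γ i)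
    (hΩ : 0 < Fintype.card Ω)
    (indep : ∀ i (T : Finset I), (∀ j ∈ T, j ∉ Γ i) →
      (A i ∩ Wfree A T).card * Fintype.card Ω = (A i).card * (Wfree A T).card)
    (p : ℝ) (hp0 : 0 ≤ p) (hp : ∀ i, ((A i).card : ℝ) ≤ p * Fintype.card Ω)
    (D : ℕ) (hD1 : 1 ≤ D) (hD : ∀ i, (Γ i).card ≤ D)
    (hpD : 4 * p * D ≤ 1) :
    ∃ ω : Ω, ∀ i, ω ∉ A i := by
  set x : ℝ := 1 / (2 * D) with hx
  have hD1' : (1:ℝ) ≤ D := by exact_mod_cast hD1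
  have hDpos : (0:ℝ) < D := by linarith
  have hx_pos : 0 < x := by positivity
  have hx_half : x ≤ 1/2 := by
    rw [hx]
    rw [div_le_div_iff₀ (by positivity) (by norm_num)]
    linarith
  have hpx : p ≤ x / 2 := by
    rw [hx, div_div, le_div_iff₀ (by positivity)]
    nlinarith
  have hber : (1/2 : ℝ) ≤ (1 - x) ^ D := by
    have h1 := one_add_mul_le_pow (a := -x) (by linarith) D
    have hDx : (D : ℝ) * x = 1/2 := by
      rw [hx]; field_simp
    calc (1/2:ℝ) = 1 + (D:ℝ) * (-x) := by rw [mul_neg, hDx]; ring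
    _ ≤ (1 + -x) ^ D := h1
    _ = (1 - x) ^ D := by ring_nf
  have hpxD : ∀ m : ℕ, m ≤ D → p ≤ x * (1 - x) ^ m := by
    intro m hm
    have h1 : (1 - x) ^ D ≤ (1 - x) ^ m :=
      pow_le_pow_of_le_one (by linarith) (by linarith) hm
    calc p ≤ x / 2 := hpx
    _ = x * (1/2) := by ring
    _ ≤ x * (1 - x) ^ D := by nlinarith
    _ ≤ x * (1 - x) ^ m := by nlinarith
  have hΩR : (0:ℝ) < Fintype.card Ω := by exact_mod_cast hΩ
  -- main claim by strong induction
  have claim : ∀ n (T : Finset I), T.card ≤ n →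
      (0 < ((Wfree A T).card : ℝ)) ∧
      ∀ i, ((A i ∩ Wfree A T).card : ℝ) ≤ x * (Wfree A T).card := by
    intro n
    induction n with
    | zero =>
      intro T hT
      have hTe : T = ∅ := Finset.card_eq_zero.mp (Nat.le_zero.mp hT)
      subst hTe
      rw [Wfree_empty]
      constructor
      · rw [Finset.card_univ]; exact hΩR
      · intro i
        rw [inter_univ, Finset.card_univ]
        calc ((A i).card : ℝ) ≤ p * Fintype.card Ω := hp i
          _ ≤ x * Fintype.card Ω := by nlinarith
    | succ n ih =>
      intro T hT
      by_cases hTn : T.card ≤ n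
      · exact ih T hTn
      have hTcard : T.card = n + 1 := le_antisymm hT (by omega)
      have hTne : T.Nonempty := by
        rw [← Finset.card_pos, hTcard]; omega
      -- positivity
      have hposT : 0 < ((Wfree A T).card : ℝ) := by
        obtain ⟨j, hj⟩ := hTne
        have hins : insert j (T.erase j) = T := Finset.insert_erase hj
        have hcard' : (T.erase j).card ≤ n := by
          rw [Finset.card_erase_of_mem hj, hTcard]; omega
        obtain ⟨hpos', hbd'⟩ := ih _ hcard'
        have := card_Wfree_insert A j (T.erase j)
        rw [hins] at this
        have hb := hbd' j
        rw [this]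
        nlinarith
      refine ⟨hposT, fun i => ?_⟩
      set T₁ : Finset I := T ∩ Γ i with hT₁
      set T₂ : Finset I := T \ Γ i with hT₂
      have hT2sub : T₂ ⊆ T := sdiff_subset
      have hT2Γ : ∀ j ∈ T₂, j ∉ Γ i := fun j hj => (Finset.mem_sdiff.mp hj).2
      have hunion : T₂ ∪ T₁ = T := by
        rw [hT₁, hT₂]; rw [Finset.sdiff_union_inter]
      -- indep at T₂
      have hindep : ((A i ∩ Wfree A T₂).card : ℝ) ≤ p * (Wfree A T₂).card := by
        have h := indep i T₂ hT2Γ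
        have h' := congrArg (fun n : ℕ => (n : ℝ)) h
        push_cast at h'
        have hAi := hp i
        have hW2nn : (0:ℝ) ≤ ((Wfree A T₂).card : ℝ) := by positivity
        rw [← mul_le_mul_iff_of_pos_right hΩR]
        calc ((A i ∩ Wfree A T₂).card : ℝ) * Fintype.card Ω
            = (A i).card * (Wfree A T₂).card := h'
          _ ≤ (p * Fintype.card Ω) * (Wfree A T₂).card := by nlinarith
          _ = p * (Wfree A T₂).card * Fintype.card Ω := by ring
      -- lower bound on W T vs W T₂ via removing T₁ one at a time
      have hlow : ∀ T₁' ⊆ T₁, (1 - x) ^ T₁'.card * ((Wfree A T₂).card : ℝ)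
          ≤ (Wfree A (T₂ ∪ T₁')).card := by
        intro T₁' hsub
        induction T₁' using Finset.induction_on with
        | empty => simp
        | @insert j s hjs ihs =>
          have hsub' : s ⊆ T₁ := (Finset.subset_insert j s).trans hsub
          have hjT₁ : j ∈ T₁ := hsub (Finset.mem_insert_self j s)
          have hjT : j ∈ T := (Finset.inter_subset_left) hjT₁
          have hjΓ : j ∈ Γ i := (Finset.inter_subset_right) hjT₁
          have hjT₂ : j ∉ T₂ := fun h => (hT2Γ j h) hjΓ
          have hcards : (T₂ ∪ s).card ≤ n := by
            have hsubT : T₂ ∪ s ⊆ T.erase j := by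
              intro l hl
              rw [Finset.mem_erase]
              rcases Finset.mem_union.mp hl with h | h
              · exact ⟨fun he => hjT₂ (he ▸ h), hT2sub h⟩
              · refine ⟨fun he => hjs (he ▸ h), (Finset.inter_subset_left (hsub' h))⟩
            have h1 := Finset.card_le_card hsubT
            rw [Finset.card_erase_of_mem hjT, hTcard] at h1
            omega
          obtain ⟨hpos2, hbd2⟩ := ih _ hcards
          have hrec := card_Wfree_insert A j (T₂ ∪ s)
          have hins : T₂ ∪ insert j s = insert j (T₂ ∪ s) := by
            rw [Finset.union_insert]
          rw [hins, hrec]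
          have hb := hbd2 j
          have hih := ihs hsub'
          rw [Finset.card_insert_of_notMem hjs]
          have h1x : (0:ℝ) ≤ 1 - x := by linarith
          have step1 := mul_le_mul_of_nonneg_left hih h1x
          have step2 : (1 - x) * ((Wfree A (T₂ ∪ s)).card : ℝ)
              ≤ ((Wfree A (T₂ ∪ s)).card : ℝ) - ((A j ∩ Wfree A (T₂ ∪ s)).card : ℝ) := by
            linarith
          calc (1 - x) ^ (s.card + 1) * ((Wfree A T₂).card : ℝ)
              = (1 - x) * ((1 - x) ^ s.card * (Wfree A T₂).card) := by ring
            _ ≤ (1 - x) * (Wfree A (T₂ ∪ s)).card := step1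
            _ ≤ ((Wfree A (T₂ ∪ s)).card : ℝ) - ((A j ∩ Wfree A (T₂ ∪ s)).card : ℝ) := step2
      have hlowT := hlow T₁ (Finset.Subset.refl _)
      rw [hunion] at hlowT
      have hT₁D : T₁.card ≤ D := le_trans (Finset.card_le_card Finset.inter_subset_right) (hD i)
      have hWsub : Wfree A T ⊆ Wfree A T₂ := Wfree_mono A hT2sub
      have hmono : ((A i ∩ Wfree A T).card : ℝ) ≤ ((A i ∩ Wfree A T₂).card : ℝ) := by
        exact_mod_cast Finset.card_le_card (Finset.inter_subset_inter (le_refl _) hWsub)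
      have hWpos2 : (0:ℝ) < ((Wfree A T₂).card : ℝ) := by
        rcases Finset.eq_empty_or_nonempty T₁ with h | h
        · rw [← hunion, h, Finset.union_empty] at hposT; exact hposT
        · have : T₂.card ≤ n := by
            have : T₂ ⊂ T := by
              rw [Finset.ssubset_iff_of_subset hT2sub]
              obtain ⟨j, hj⟩ := h
              exact ⟨j, Finset.inter_subset_left hj, fun hc => (hT2Γ j hc) (Finset.inter_subset_right hj)⟩
            have := Finset.card_lt_card this
            omega
          exact (ih _ this).1
      have hpm := hpxD T₁.card hT₁D
      have hW2nn : (0:ℝ) ≤ ((Wfree A T₂).card : ℝ) := hWpos2.le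
      -- combine
      calc ((A i ∩ Wfree A T).card : ℝ) ≤ ((A i ∩ Wfree A T₂).card : ℝ) := hmono
        _ ≤ p * (Wfree A T₂).card := hindep
        _ ≤ (x * (1 - x) ^ T₁.card) * (Wfree A T₂).card :=
            mul_le_mul_of_nonneg_right hpm hW2nn
        _ = x * ((1 - x) ^ T₁.card * (Wfree A T₂).card) := by ring
        _ ≤ x * (Wfree A T).card := mul_le_mul_of_nonneg_left hlowT hx_pos.le
  obtain ⟨hpos, -⟩ := claim (Finset.univ : Finset I).card Finset.univ le_rfl
  have hne : (Wfree A Finset.univ).Nonempty := by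
    rw [← Finset.card_pos]; exact_mod_cast hpos
  obtain ⟨ω, hω⟩ := hne
  refine ⟨ω, fun i => ?_⟩
  simp only [Wfree, mem_filter] at hω
  exact hω.2 i (mem_univ i)

end LLL

open Finset

section Dep
variable {M k : ℕ} {α : Type*} [Fintype α] [DecidableEq α] [Nonempty α]

/-- `X` depends only on the columns in `S`. -/
def DependsOnCols (X : Finset (Fin M → Fin k → α)) (S : Finset (Fin k)) : Prop :=
  ∀ B B' : Fin M → Fin k → α, (∀ r j, j ∈ S → B r j = B' r j) → (B ∈ X ↔ B' ∈ X)

noncomputable def splitEquiv (S : Finset (Fin k)) :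
    (Fin M → Fin k → α) ≃
      ((Fin M → {j : Fin k // j ∈ S} → α) × (Fin M → {j : Fin k // j ∉ S} → α)) where
  toFun B := (fun r j => B r j.1, fun r j => B r j.1)
  invFun fg := fun r j => if h : j ∈ S then fg.1 r ⟨j, h⟩ else fg.2 r ⟨j, h⟩
  left_inv B := by
    funext r j
    by_cases h : j ∈ S <;> simp [h]
  right_inv fg := by
    refine Prod.ext ?_ ?_ <;> funext r j <;> simp [j.2]

lemma card_inter_mul_of_dependsOn (X Y : Finset (Fin M → Fin k → α)) (S : Finset (Fin k))
    (hX : DependsOnCols X S) (hY : DependsOnCols Y Sᶜ) :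
    (X ∩ Y).card * Fintype.card (Fin M → Fin k → α) = X.card * Y.card := by
  classical
  set e := (splitEquiv (α := α) (M := M) S)
  obtain ⟨g₀⟩ : Nonempty (Fin M → {j : Fin k // j ∉ S} → α) := inferInstance
  obtain ⟨f₀⟩ : Nonempty (Fin M → {j : Fin k // j ∈ S} → α) := inferInstance
  set Xp : Finset (Fin M → {j : Fin k // j ∈ S} → α) :=
    Finset.univ.filter (fun f => e.symm (f, g₀) ∈ X) with hXp
  set Yq : Finset (Fin M → {j : Fin k // j ∉ S} → α) :=
    Finset.univ.filter (fun g => e.symm (f₀, g) ∈ Y) with hYq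
  have hmemX : ∀ B, B ∈ X ↔ (e B).1 ∈ Xp := by
    intro B
    rw [hXp, Finset.mem_filter]
    simp only [Finset.mem_univ, true_and]
    apply hX
    intro r j hj
    simp [e, splitEquiv, hj]
  have hmemY : ∀ B, B ∈ Y ↔ (e B).2 ∈ Yq := by
    intro B
    rw [hYq, Finset.mem_filter]
    simp only [Finset.mem_univ, true_and]
    apply hY
    intro r j hj
    rw [Finset.mem_compl] at hj
    simp [e, splitEquiv, hj]
  -- counting
  have key : ∀ (X' : Finset _) (Y' : Finset _),
      ((X' ×ˢ Y').map e.symm.toEmbedding).card = X'.card * Y'.card := by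
    intro X' Y'
    rw [Finset.card_map, Finset.card_product]
  have hXY : X ∩ Y = (Xp ×ˢ Yq).map e.symm.toEmbedding := by
    ext B
    simp only [Finset.mem_inter, Finset.mem_map, Finset.mem_product, Equiv.toEmbedding_apply]
    constructor
    · intro ⟨h1, h2⟩
      exact ⟨e B, ⟨(hmemX B).mp h1, (hmemY B).mp h2⟩, e.symm_apply_apply B⟩
    · rintro ⟨fg, ⟨h1, h2⟩, rfl⟩
      rw [hmemX, hmemY, e.apply_symm_apply]
      exact ⟨h1, h2⟩
  have hXeq : X = (Xp ×ˢ (Finset.univ : Finset (Fin M → {j : Fin k // j ∉ S} → α))).map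
      e.symm.toEmbedding := by
    ext B
    simp only [Finset.mem_map, Finset.mem_product, Equiv.toEmbedding_apply, Finset.mem_univ,
      and_true]
    constructor
    · intro h1
      exact ⟨e B, (hmemX B).mp h1, e.symm_apply_apply B⟩
    · rintro ⟨fg, h1, rfl⟩
      rw [hmemX, e.apply_symm_apply]
      exact h1
  have hYeq : Y = ((Finset.univ : Finset (Fin M → {j : Fin k // j ∈ S} → α)) ×ˢ Yq).map
      e.symm.toEmbedding := by
    ext B
    simp only [Finset.mem_map, Finset.mem_product, Equiv.toEmbedding_apply, Finset.mem_univ,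
      true_and]
    constructor
    · intro h1
      exact ⟨e B, (hmemY B).mp h1, e.symm_apply_apply B⟩
    · rintro ⟨fg, h1, rfl⟩
      rw [hmemY, e.apply_symm_apply]
      exact h1
  have hcardΩ : Fintype.card (Fin M → Fin k → α) =
      Fintype.card (Fin M → {j : Fin k // j ∈ S} → α) *
      Fintype.card (Fin M → {j : Fin k // j ∉ S} → α) := by
    rw [Fintype.card_congr e, Fintype.card_prod]
  rw [hXY, hXeq, hYeq, key, key, key, hcardΩ, Finset.card_univ, Finset.card_univ]
  ring

end Dep

open Finset

-- ===== assume lll.lean and dep.lean content above (tested separately) =====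
section App
variable (v t k M : ℕ)

abbrev OmegaB (v M k : ℕ) := Fin M → Fin k → ZMod v
abbrev IdxI (v t k : ℕ) := (Fin t → Fin k) × (Fin t → ZMod v)

section withM

variable [NeZero v] [NeZero t]

/-- per-row failure set -/
noncomputable def Frow (c : Fin t → Fin k) (δ : Fin t → ZMod v) : Finset (Fin k → ZMod v) :=
  Finset.univ.filter (fun w => ¬ ∀ i, w (c i) = w (c 0) + δ i)

noncomputable def Ev (q : IdxI v t k) : Finset (OmegaB v M k) :=
  if Function.Injective q.1 ∧ q.2 0 = 0 then
    Finset.univ.filter (fun B => ∀ r, B r ∈ Frow v t k q.1 q.2)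
  else ∅

noncomputable def Nbr (q : IdxI v t k) : Finset (IdxI v t k) :=
  Finset.univ.filter (fun q' => ∃ i j, q'.1 i = q.1 j)

lemma self_mem_Nbr (q : IdxI v t k) : q ∈ Nbr v t k q := by
  simp only [Nbr, mem_filter, mem_univ, true_and]
  exact ⟨0, 0, rfl⟩

/-- the set of `f` with `f i` fixed has `k^(t-1)` elements at most -/
lemma card_Nbr_le (q : IdxI v t k) (ht : 1 ≤ t) :
    (Nbr v t k q).card ≤ t * t * (k ^ (t-1) * v ^ t) := by
  classical
  have hsub : Nbr v t k q ⊆ (Finset.univ : Finset (Fin t × Fin t)).biUnion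
      (fun ij => Finset.univ.filter (fun q' : IdxI v t k => q'.1 ij.1 = q.1 ij.2)) := by
    intro q' hq'
    simp only [Nbr, mem_filter, mem_univ, true_and] at hq'
    obtain ⟨i, j, hij⟩ := hq'
    rw [Finset.mem_biUnion]
    exact ⟨(i, j), mem_univ _, by rw [mem_filter]; exact ⟨mem_univ _, hij⟩⟩
  refine (Finset.card_le_card hsub).trans ((Finset.card_biUnion_le).trans ?_)
  have hfiber : ∀ ij : Fin t × Fin t,
      (Finset.univ.filter (fun q' : IdxI v t k => q'.1 ij.1 = q.1 ij.2)).card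
        ≤ k ^ (t-1) * v ^ t := by
    intro ij
    -- inject into ({j // j ≠ ij.1} → Fin k) × (Fin t → ZMod v)
    have hinj : Set.InjOn
        (fun q' : IdxI v t k => ((fun j : {j : Fin t // j ≠ ij.1} => q'.1 j.1), q'.2))
        ↑(Finset.univ.filter (fun q' : IdxI v t k => q'.1 ij.1 = q.1 ij.2)) := by
      intro a ha b hb hab
      simp only [Finset.coe_filter, Set.mem_setOf_eq, mem_univ, true_and] at ha hb
      have h1 := congrArg Prod.fst hab
      have h2 := congrArg Prod.snd hab
      simp only at h1 h2
      refine Prod.ext ?_ h2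
      funext j
      by_cases hj : j = ij.1
      · rw [hj, ha, hb]
      · exact congrFun h1 ⟨j, hj⟩
    have := Finset.card_le_card_of_injOn _ (fun x _ => Finset.mem_univ _) hinj
    refine this.trans ?_
    rw [Finset.card_univ, Fintype.card_prod, Fintype.card_pi, Fintype.card_pi]
    simp only [Fintype.card_fin, Finset.prod_const, Finset.card_univ, Fintype.card_fin]
    have hne : Fintype.card {j : Fin t // j ≠ ij.1} = t - 1 := by
      have := Fintype.card_subtype_compl (fun j : Fin t => j = ij.1)
      rw [Fintype.card_subtype_eq, Fintype.card_fin] at this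
      simpa using this
    rw [hne, ZMod.card]
  calc (∑ ij : Fin t × Fin t, (Finset.univ.filter
          (fun q' : IdxI v t k => q'.1 ij.1 = q.1 ij.2)).card)
      ≤ ∑ _ij : Fin t × Fin t, k ^ (t-1) * v ^ t := Finset.sum_le_sum (fun ij _ => hfiber ij)
    _ = t * t * (k ^ (t-1) * v ^ t) := by
        rw [Finset.sum_const, Finset.card_univ, Fintype.card_prod, Fintype.card_fin]
        simp [mul_assoc]


/-- cardinality of the per-row "hit" set -/
lemma card_Grow (c : Fin t → Fin k) (δ : Fin t → ZMod v)
    (hc : Function.Injective c) (hδ : δ 0 = 0) :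
    (Finset.univ.filter (fun w : Fin k → ZMod v => ∀ i, w (c i) = w (c 0) + δ i)).card
      = v ^ (k - t + 1) := by
  classical
  rw [← Fintype.card_subtype]
  have e : {w : Fin k → ZMod v // ∀ i, w (c i) = w (c 0) + δ i} ≃
      (ZMod v × ({j : Fin k // j ∉ Finset.image c Finset.univ} → ZMod v)) := by
    refine
      { toFun := fun w => (w.1 (c 0), fun j => w.1 j.1)
        invFun := fun p =>
          ⟨fun j => if h : ∃ i, c i = j then p.1 + δ h.choose else p.2 ⟨j, by
              simp only [Finset.mem_image, Finset.mem_univ, true_and]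
              exact fun ⟨i, hi⟩ => h ⟨i, hi⟩⟩, ?_⟩
        left_inv := ?_
        right_inv := ?_ }
    · intro i
      have h1 : ∃ i', c i' = c i := ⟨i, rfl⟩
      have h0 : ∃ i', c i' = c 0 := ⟨0, rfl⟩
      simp only [dif_pos h1, dif_pos h0]
      have e1 : h1.choose = i := hc h1.choose_spec
      have e0 : h0.choose = 0 := hc h0.choose_spec
      rw [e1, e0, hδ, add_zero]
    · intro w
      apply Subtype.ext
      funext j
      by_cases h : ∃ i, c i = j
      · simp only [dif_pos h]
        have hch := h.choose_spec
        have h2 := (w.2 h.choose).symm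
        rw [hch] at h2
        exact h2
      · simp only [dif_neg h]
    · intro p
      refine Prod.ext ?_ ?_
      · have h0 : ∃ i', c i' = c 0 := ⟨0, rfl⟩
        simp only [dif_pos h0]
        have e0 : h0.choose = 0 := hc h0.choose_spec
        rw [e0, hδ, add_zero]
      · funext j
        have hj : ¬ ∃ i, c i = j.1 := by
          have := j.2
          simp only [Finset.mem_image, Finset.mem_univ, true_and] at this
          exact fun ⟨i, hi⟩ => this ⟨i, hi⟩
        simp only [dif_neg hj]
  rw [Fintype.card_congr e, Fintype.card_prod, Fintype.card_pi]
  have hcompl : Fintype.card {j : Fin k // j ∉ Finset.image c Finset.univ} = k - t := by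
    have h1 := Fintype.card_subtype_compl (fun j : Fin k => j ∈ Finset.image c Finset.univ)
    have h2 : Fintype.card {j : Fin k // j ∈ Finset.image c Finset.univ}
        = (Finset.image c Finset.univ).card := Fintype.card_coe _
    rw [h2, Finset.card_image_of_injective _ hc, Finset.card_univ, Fintype.card_fin,
      Fintype.card_fin] at h1
    exact h1
  simp only [Finset.prod_const, Finset.card_univ, hcompl, ZMod.card]
  ring

lemma card_Frow (c : Fin t → Fin k) (δ : Fin t → ZMod v)
    (hc : Function.Injective c) (hδ : δ 0 = 0) :
    (Frow v t k c δ).card = v ^ k - v ^ (k - t + 1) := by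
  classical
  have hsplit := Finset.card_filter_add_card_filter_not
    (s := (Finset.univ : Finset (Fin k → ZMod v)))
    (p := fun w => ∀ i, w (c i) = w (c 0) + δ i)
  rw [card_Grow v t k c δ hc hδ] at hsplit
  have huniv : (Finset.univ : Finset (Fin k → ZMod v)).card = v ^ k := by
    rw [Finset.card_univ, Fintype.card_pi]
    simp [ZMod.card]
  rw [huniv] at hsplit
  have heq : (Frow v t k c δ).card
      = (Finset.univ.filter (fun w : Fin k → ZMod v => ¬ ∀ i, w (c i) = w (c 0) + δ i)).card :=
    rfl
  rw [heq, ← hsplit, Nat.add_sub_cancel_left]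

lemma card_Ev_le (hv : 2 ≤ v) (ht : 2 ≤ t) (q : IdxI v t k) :
    ((Ev v t k M q).card : ℝ) ≤ (1 - 1/(v:ℝ)^(t-1)) ^ M * Fintype.card (OmegaB v M k) := by
  classical
  have hv1 : (1:ℝ) < (v:ℝ)^(t-1) := by
    have : (2:ℝ) ≤ (v:ℝ) := by exact_mod_cast hv
    calc (1:ℝ) < 2 ^ (t-1) := by
          apply one_lt_pow₀ (by norm_num)
          omega
      _ ≤ (v:ℝ) ^ (t-1) := by
          apply pow_le_pow_left₀ (by norm_num) this
  have hq0 : (0:ℝ) ≤ 1 - 1/(v:ℝ)^(t-1) := by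
    rw [sub_nonneg, div_le_one (by linarith)]
    linarith
  have hΩcard : (Fintype.card (OmegaB v M k) : ℝ) = ((v:ℝ) ^ k) ^ M := by
    rw [Fintype.card_pi]
    push_cast
    simp only [Finset.prod_const, Finset.card_univ, Fintype.card_fin]
    congr 1
    rw [Fintype.card_pi]
    simp [ZMod.card]
  rw [Ev]
  split_ifs with h
  · obtain ⟨hc, hδ⟩ := h
    have htk : t ≤ k := by
      have h5 := Fintype.card_le_of_injective _ hc
      simpa using h5
    have hv1' : 1 ≤ v := by omega
    have hexp0 : k - t + 1 ≤ k := by omega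
    have hexp : (k - t + 1) + (t - 1) = k := by omega
    -- card of the filtered set is (Frow).card ^ M
    have hcardpow : (Finset.univ.filter
        (fun B : OmegaB v M k => ∀ r, B r ∈ Frow v t k q.1 q.2)).card
        = (Frow v t k q.1 q.2).card ^ M := by
      rw [← Fintype.card_subtype]
      have e : {B : OmegaB v M k // ∀ r, B r ∈ Frow v t k q.1 q.2} ≃
          (Fin M → {w : Fin k → ZMod v // w ∈ Frow v t k q.1 q.2}) :=
        Equiv.subtypePiEquivPi
      rw [Fintype.card_congr e, Fintype.card_pi]
      simp [Fintype.card_coe]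
    rw [hcardpow, card_Frow v t k q.1 q.2 hc hδ]
    -- now the real estimate
    have hle : v ^ (k - t + 1) ≤ v ^ k := Nat.pow_le_pow_right hv1' hexp0
    have hcast : ((v ^ k - v ^ (k - t + 1) : ℕ) : ℝ) = (v:ℝ)^k - (v:ℝ)^(k-t+1) := by
      push_cast [Nat.cast_sub hle]
      ring
    have hkey : (v:ℝ)^k - (v:ℝ)^(k-t+1) = (1 - 1/(v:ℝ)^(t-1)) * (v:ℝ)^k := by
      have hvpos : (0:ℝ) < (v:ℝ)^(t-1) := by linarith
      have : (v:ℝ)^(k-t+1) * (v:ℝ)^(t-1) = (v:ℝ)^k := by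
        rw [← pow_add, hexp]
      field_simp
      linarith [this]
    push_cast
    rw [hcast, hkey, hΩcard, ← mul_pow]
  · simp only [Finset.card_empty, Nat.cast_zero]
    positivity

lemma dependsOn_mono {X : Finset (OmegaB v M k)} {S S' : Finset (Fin k)}
    (h : DependsOnCols X S) (hSS : S ⊆ S') : DependsOnCols X S' :=
  fun B B' hag => h B B' (fun r j hj => hag r j (hSS hj))

lemma dependsOn_Ev (q : IdxI v t k) :
    DependsOnCols (Ev v t k M q) (Finset.image q.1 Finset.univ) := by
  intro B B' hag
  have hagc : ∀ r i, B r (q.1 i) = B' r (q.1 i) := fun r i =>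
    hag r (q.1 i) (Finset.mem_image_of_mem _ (Finset.mem_univ i))
  unfold Ev
  split_ifs with h
  · simp only [Finset.mem_filter, Finset.mem_univ, true_and]
    unfold Frow
    simp only [Finset.mem_filter, Finset.mem_univ, true_and]
    constructor
    · intro hB r hcon
      refine hB r ?_
      intro i
      rw [hagc r i, hagc r 0]
      exact hcon i
    · intro hB r hcon
      refine hB r ?_
      intro i
      rw [← hagc r i, ← hagc r 0]
      exact hcon i
  · simp

lemma dependsOn_Wfree {T : Finset (IdxI v t k)} {S : Finset (Fin k)}
    (hT : ∀ q ∈ T, DependsOnCols (Ev v t k M q) S) :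
    DependsOnCols (Wfree (Ev v t k M) T) S := by
  intro B B' hag
  simp only [Wfree, Finset.mem_filter, Finset.mem_univ, true_and]
  constructor
  · intro h q hq hmem
    exact h q hq ((hT q hq B B' hag).mpr hmem)
  · intro h q hq hmem
    exact h q hq ((hT q hq B B' hag).mp hmem)

lemma indep_Ev (q : IdxI v t k) (T : Finset (IdxI v t k))
    (hT : ∀ q' ∈ T, q' ∉ Nbr v t k q) :
    (Ev v t k M q ∩ Wfree (Ev v t k M) T).card * Fintype.card (OmegaB v M k)
      = (Ev v t k M q).card * (Wfree (Ev v t k M) T).card := by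
  classical
  set S : Finset (Fin k) := Finset.image q.1 Finset.univ with hS
  have hXdep : DependsOnCols (Ev v t k M q) S := dependsOn_Ev v t k M q
  have hYdep : DependsOnCols (Wfree (Ev v t k M) T) Sᶜ := by
    apply dependsOn_Wfree
    intro q' hq'
    have hdisj : ∀ i, q'.1 i ∉ S := by
      intro i hiS
      rw [hS, Finset.mem_image] at hiS
      obtain ⟨j, -, hj⟩ := hiS
      exact hT q' hq' (by
        simp only [Nbr, Finset.mem_filter, Finset.mem_univ, true_and]
        exact ⟨i, j, hj.symm⟩)
    refine dependsOn_mono v k M (dependsOn_Ev v t k M q') ?_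
    intro j hj
    rw [Finset.mem_image] at hj
    obtain ⟨i, -, rfl⟩ := hj
    rw [Finset.mem_compl]
    exact hdisj i
  exact card_inter_mul_of_dependsOn _ _ S hXdep hYdep

/-- Existence of a "difference covering" array via the local lemma. -/
theorem exists_good_B (hv : 2 ≤ v) (ht : 2 ≤ t) (hk : 1 ≤ k)
    (hcond : 4 * (1 - 1/(v:ℝ)^(t-1)) ^ M * ((t * t * (k ^ (t-1) * v ^ t) : ℕ) : ℝ) ≤ 1) :
    ∃ B : Fin M → Fin k → ZMod v, ∀ (c : Fin t → Fin k) (δ : Fin t → ZMod v),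
      Function.Injective c → δ 0 = 0 → ∃ r, ∀ i, B r (c i) = B r (c 0) + δ i := by
  classical
  have hv1 : (1:ℝ) < (v:ℝ)^(t-1) := by
    have h2 : (2:ℝ) ≤ (v:ℝ) := by exact_mod_cast hv
    calc (1:ℝ) < 2 ^ (t-1) := by
          apply one_lt_pow₀ (by norm_num); omega
      _ ≤ (v:ℝ) ^ (t-1) := pow_le_pow_left₀ (by norm_num) h2 _
  have hq0 : (0:ℝ) ≤ 1 - 1/(v:ℝ)^(t-1) := by
    rw [sub_nonneg, div_le_one (by linarith)]; linarith
  have hΩpos : 0 < Fintype.card (OmegaB v M k) := Fintype.card_pos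
  have hD1 : 1 ≤ t * t * (k ^ (t-1) * v ^ t) := by
    have h1 : 1 ≤ k ^ (t-1) := Nat.one_le_pow _ _ (by omega)
    have h2 : 1 ≤ v ^ t := Nat.one_le_pow _ _ (by omega)
    have h3 : 1 ≤ t := by omega
    calc 1 = 1 * 1 * (1 * 1) := by norm_num
    _ ≤ t * t * (k ^ (t-1) * v ^ t) := by
        apply Nat.mul_le_mul (Nat.mul_le_mul h3 h3) (Nat.mul_le_mul h1 h2)
  obtain ⟨B, hB⟩ := lll_crude (Ev v t k M) (Nbr v t k) (self_mem_Nbr v t k) hΩpos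
    (indep_Ev v t k M)
    ((1 - 1/(v:ℝ)^(t-1)) ^ M) (by positivity)
    (card_Ev_le v t k M hv ht)
    (t * t * (k ^ (t-1) * v ^ t)) hD1
    (fun q => card_Nbr_le v t k q (by omega))
    (by linarith [hcond])
  refine ⟨B, fun c δ hc hδ => ?_⟩
  have := hB (c, δ)
  unfold Ev at this
  rw [if_pos ⟨hc, hδ⟩] at this
  simp only [Finset.mem_filter, Finset.mem_univ, true_and, not_forall] at this
  obtain ⟨r, hr⟩ := this
  refine ⟨r, fun i => ?_⟩
  unfold Frow at hr
  simp only [Finset.mem_filter, Finset.mem_univ, true_and, not_not] at hr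
  exact hr i

end withM
end App

/-- `A` is a covering array of strength `t`: every `t` distinct columns cover all
`t`-tuples over the alphabet among their rows. -/
def IsCoveringArray {N k v : ℕ} (t : ℕ) (A : Fin N → Fin k → Fin v) : Prop :=
  ∀ cols : Fin t → Fin k, Function.Injective cols →
    ∀ tup : Fin t → Fin v, ∃ r : Fin N, ∀ i, A r (cols i) = tup i

/-- `CAN t k v` is the minimum number of rows of a covering array of strength `t`
with `k` columns over a `v`-letter alphabet. -/
noncomputable def CAN (t k v : ℕ) : ℕ :=
  sInf {N | ∃ A : Fin N → Fin k → Fin v, IsCoveringArray t A}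

theorem CAN_le_of_cond (t k v M : ℕ) (hv : 2 ≤ v) (ht : 2 ≤ t) (hk : 1 ≤ k)
    (hcond : 4 * (1 - 1/(v:ℝ)^(t-1)) ^ M * ((t * t * (k ^ (t-1) * v ^ t) : ℕ) : ℝ) ≤ 1) :
    CAN t k v ≤ v * M := by
  haveI : NeZero v := ⟨by omega⟩
  haveI : NeZero t := ⟨by omega⟩
  obtain ⟨B, hB⟩ := exists_good_B v t k M hv ht hk hcond
  have hcard : Fintype.card (ZMod v) = Fintype.card (Fin v) := by
    rw [ZMod.card, Fintype.card_fin]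
  set eqv : ZMod v ≃ Fin v := Fintype.equivOfCardEq hcard with heqv
  set e := finProdFinEquiv (m := v) (n := M) with he
  set A : Fin (v*M) → Fin k → Fin v :=
    fun ρ j => eqv (B (e.symm ρ).2 j + eqv.symm ((e.symm ρ).1)) with hA
  apply Nat.sInf_le
  refine ⟨A, ?_⟩
  intro cols hinj tup
  set δ : Fin t → ZMod v := fun i => eqv.symm (tup i) - eqv.symm (tup 0) with hδdef
  obtain ⟨r, hr⟩ := hB cols δ hinj (by simp [hδdef])
  set a : ZMod v := eqv.symm (tup 0) - B r (cols 0) with ha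
  refine ⟨e (eqv a, r), fun i => ?_⟩
  have hsymm : e.symm (e (eqv a, r)) = (eqv a, r) := e.symm_apply_apply _
  show eqv (B (e.symm (e (eqv a, r))).2 (cols i) + eqv.symm ((e.symm (e (eqv a, r))).1)) = tup i
  rw [hsymm]
  simp only
  rw [Equiv.symm_apply_apply, hr i]
  have hfin : B r (cols 0) + δ i + a = eqv.symm (tup i) := by
    rw [hδdef, ha]; ring
  rw [hfin, Equiv.apply_symm_apply]

set_option maxHeartbeats 1000000

theorem d_upper_bound_general (t v : ℕ) (ht : 2 ≤ t) (hv : 2 ≤ v) :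
    Filter.limsup (fun k : ℕ => (CAN t k v : ℝ) / Real.logb 2 k) Filter.atTop ≤
      (v : ℝ) * ((t : ℝ) - 1) /
        Real.logb 2 ((v : ℝ) ^ (t - 1) / ((v : ℝ) ^ (t - 1) - 1)) := by
  set V : ℝ := (v:ℝ) ^ (t-1) with hV
  have hv2 : (2:ℝ) ≤ (v:ℝ) := by exact_mod_cast hv
  have hV2 : (2:ℝ) ≤ V := by
    calc (2:ℝ) = 2^1 := by norm_num
    _ ≤ (2:ℝ) ^ (t-1) := by
        apply pow_le_pow_right₀ (by norm_num)
        omega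
    _ ≤ V := by
        rw [hV]
        exact pow_le_pow_left₀ (by norm_num) hv2 _
  have hV1 : (1:ℝ) < V := by linarith
  set q : ℝ := 1 - 1/V with hqdef
  have hqpos : 0 < q := by
    rw [hqdef, sub_pos, div_lt_one (by linarith)]
    linarith
  have hql1 : q < 1 := by
    rw [hqdef]
    have : 0 < 1/V := by positivity
    linarith
  set c : ℝ := Real.log (V/(V-1)) with hc
  have hVV1 : (1:ℝ) < V/(V-1) := by
    rw [lt_div_iff₀ (by linarith)]
    linarith
  have hcpos : 0 < c := Real.log_pos hVV1
  have hq_eq : q = (V-1)/V := by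
    rw [hqdef]; field_simp
  have hlogq : Real.log q = -c := by
    rw [hq_eq, hc, Real.log_div (by linarith) (by linarith),
      Real.log_div (by linarith) (by linarith)]
    ring
  have hlog2 : (0:ℝ) < Real.log 2 := Real.log_pos (by norm_num)
  set L : ℝ := (v : ℝ) * ((t : ℝ) - 1) / Real.logb 2 (V/(V-1)) with hL
  have hlogbc : Real.logb 2 (V/(V-1)) = c / Real.log 2 := by
    rw [Real.logb, hc]
  have hLc : L = (v:ℝ) * ((t:ℝ)-1) * Real.log 2 / c := by
    rw [hL, hlogbc]
    field_simp
  set CC : ℝ := Real.log (4 * (t:ℝ)^2 * (v:ℝ)^t) with hCC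
  have hargpos : (0:ℝ) < 4 * (t:ℝ)^2 * (v:ℝ)^t := by positivity
  have harg1 : (1:ℝ) ≤ 4 * (t:ℝ)^2 * (v:ℝ)^t := by
    have h1 : (1:ℝ) ≤ (t:ℝ)^2 := by
      have : (1:ℝ) ≤ (t:ℝ) := by exact_mod_cast (by omega : 1 ≤ t)
      nlinarith
    have h2 : (1:ℝ) ≤ (v:ℝ)^t := one_le_pow₀ (by linarith)
    nlinarith
  have hCC0 : 0 ≤ CC := Real.log_nonneg harg1
  -- the choice of M for each k
  set Mk : ℕ → ℕ := fun k => ⌈(((t:ℝ)-1) * Real.log k + CC) / c⌉₊ with hMk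
  -- the key bound for every k ≥ 1
  have hCANle : ∀ k : ℕ, 1 ≤ k → CAN t k v ≤ v * Mk k := by
    intro k hk
    apply CAN_le_of_cond t k v (Mk k) hv ht hk
    -- verify the LLL numeric condition
    have hknn : (1:ℝ) ≤ (k:ℝ) := by exact_mod_cast hk
    have hlogk0 : 0 ≤ Real.log k := Real.log_nonneg hknn
    set numer : ℝ := ((t:ℝ)-1) * Real.log k + CC with hnumer
    have hnum0 : 0 ≤ numer := by
      have ht1 : (0:ℝ) ≤ (t:ℝ)-1 := by
        have : (2:ℝ) ≤ (t:ℝ) := by exact_mod_cast ht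
        linarith
      positivity
    have hMle : numer ≤ (Mk k : ℝ) * c := by
      have h1 : numer / c ≤ (Mk k : ℝ) := Nat.le_ceil _
      calc numer = (numer / c) * c := by field_simp
      _ ≤ (Mk k : ℝ) * c := by
          apply mul_le_mul_of_nonneg_right h1 hcpos.le
    have hqM : q ^ (Mk k) ≤ Real.exp (-numer) := by
      have h1 : q ^ (Mk k) = Real.exp ((Mk k : ℝ) * Real.log q) := by
        rw [Real.exp_nat_mul, Real.exp_log hqpos]
      rw [h1]
      apply Real.exp_le_exp.mpr
      rw [hlogq]
      have := hMle
      nlinarith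
    have hKpos : (0:ℝ) < (k:ℝ)^(t-1) := by positivity
    have hexp_eq : Real.exp (-numer) = ((k:ℝ)^(t-1) * (4 * (t:ℝ)^2 * (v:ℝ)^t))⁻¹ := by
      have h2 : numer = Real.log ((k:ℝ)^(t-1) * (4 * (t:ℝ)^2 * (v:ℝ)^t)) := by
        rw [Real.log_mul (by positivity) (by positivity), Real.log_pow]
        rw [hnumer, hCC]
        have hcast : ((t-1 : ℕ) : ℝ) = (t:ℝ) - 1 := by
          have : 1 ≤ t := by omega
          push_cast [Nat.cast_sub this]
          ring
        rw [hcast]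
      rw [h2, ← Real.log_inv, Real.exp_log]
      positivity
    have hDcast : ((t * t * (k ^ (t-1) * v ^ t) : ℕ) : ℝ)
        = (t:ℝ) * (t:ℝ) * ((k:ℝ)^(t-1) * (v:ℝ)^t) := by
      push_cast
      ring
    have hDnn : (0:ℝ) ≤ ((t * t * (k ^ (t-1) * v ^ t) : ℕ) : ℝ) := by positivity
    calc 4 * q ^ (Mk k) * ((t * t * (k ^ (t-1) * v ^ t) : ℕ) : ℝ)
        ≤ 4 * Real.exp (-numer) * ((t * t * (k ^ (t-1) * v ^ t) : ℕ) : ℝ) := by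
          apply mul_le_mul_of_nonneg_right _ hDnn
          linarith
      _ = 1 := by
          rw [hexp_eq, hDcast]
          have htpos : (0:ℝ) < (t:ℝ) := by
            have : (2:ℝ) ≤ (t:ℝ) := by exact_mod_cast ht
            linarith
          have hvpos : (0:ℝ) < (v:ℝ)^t := by positivity
          field_simp
  -- the eventual estimate
  have hmain : ∀ ε : ℝ, 0 < ε →
      Filter.limsup (fun k : ℕ => (CAN t k v : ℝ) / Real.logb 2 k) Filter.atTop ≤ L + ε := by
    intro ε hε
    set Cst : ℝ := (v:ℝ) * (CC + c) * Real.log 2 / c with hCst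
    have htendsto : Filter.Tendsto (fun k : ℕ => Cst / Real.log k) Filter.atTop (nhds 0) := by
      apply Filter.Tendsto.div_atTop (tendsto_const_nhds)
      exact Real.tendsto_log_atTop.comp tendsto_natCast_atTop_atTop
    have hev0 : ∀ᶠ k : ℕ in Filter.atTop, Cst / Real.log k < ε :=
      htendsto.eventually_lt_const hε
    have hev1 : ∀ᶠ k : ℕ in Filter.atTop,
        (CAN t k v : ℝ) / Real.logb 2 k ≤ L + Cst / Real.log k := by
      filter_upwards [Filter.eventually_ge_atTop 2] with k hk2
      have hk1 : 1 ≤ k := by omega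
      have hk2R : (2:ℝ) ≤ (k:ℝ) := by exact_mod_cast hk2
      have hlogk : 0 < Real.log k := Real.log_pos (by linarith)
      have hlogbk : 0 < Real.logb 2 k := Real.logb_pos (by norm_num) (by linarith)
      have ht1 : (0:ℝ) ≤ (t:ℝ)-1 := by
        have : (2:ℝ) ≤ (t:ℝ) := by exact_mod_cast ht
        linarith
      have h1 : (CAN t k v : ℝ) ≤ (v:ℝ) * (Mk k) := by
        have h0 := hCANle k hk1
        have h2 : ((CAN t k v : ℕ) : ℝ) ≤ ((v * Mk k : ℕ) : ℝ) := by exact_mod_cast h0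
        push_cast at h2
        exact h2
      have hMkub : (Mk k : ℝ) ≤ (((t:ℝ)-1) * Real.log k + CC) / c + 1 := by
        have hnn : (0:ℝ) ≤ (((t:ℝ)-1) * Real.log k + CC) / c := by positivity
        exact le_of_lt (Nat.ceil_lt_add_one hnn)
      have hchain : (CAN t k v : ℝ) / Real.logb 2 k
          ≤ ((v:ℝ) * ((((t:ℝ)-1) * Real.log k + CC) / c + 1)) / Real.logb 2 k := by
        gcongr
        calc (CAN t k v : ℝ) ≤ (v:ℝ) * (Mk k) := h1
        _ ≤ (v:ℝ) * ((((t:ℝ)-1) * Real.log k + CC) / c + 1) := by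
            apply mul_le_mul_of_nonneg_left hMkub (by positivity)
      have heq : ((v:ℝ) * ((((t:ℝ)-1) * Real.log k + CC) / c + 1)) / Real.logb 2 k
          = L + Cst / Real.log k := by
        rw [Real.logb, hLc, hCst]
        field_simp
        ring
      rw [heq] at hchain
      exact hchain
    have hev : ∀ᶠ k : ℕ in Filter.atTop,
        (CAN t k v : ℝ) / Real.logb 2 k ≤ L + ε := by
      filter_upwards [hev0, hev1] with k h0 h1
      linarith
    have hcob : Filter.IsCoboundedUnder (· ≤ ·) Filter.atTop
        (fun k : ℕ => (CAN t k v : ℝ) / Real.logb 2 k) := by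
      apply Filter.isCoboundedUnder_le_of_eventually_le Filter.atTop (x := 0)
      filter_upwards [Filter.eventually_ge_atTop 2] with k hk2
      have hk2R : (2:ℝ) ≤ (k:ℝ) := by exact_mod_cast hk2
      have hlogbk : 0 < Real.logb 2 k := Real.logb_pos (by norm_num) (by linarith)
      positivity
    exact Filter.limsup_le_of_le hcob hev
  set X := Filter.limsup (fun k : ℕ => (CAN t k v : ℝ) / Real.logb 2 k) Filter.atTop with hX
  by_contra hcon
  push_neg at hcon
  have h1 := hmain ((X - L) / 2) (by linarith)
  linarith
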